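/- Let G be a subcubic graph with nonnegative edge weights w, let t=(a,b,c) and t'=(a,b,d) with d ∉ {a,b,c} be two triangles of G sharing the edge (a,b) and satisfying w(t) ≤ w(t'), and let M be a 2-matching of G containing all three edges of t. Then there exists a 2-matching M2 of G with w(M2) ≥ w(M) such that M2 does not contain all three edges of t, and every triangle of G all of whose edges lie in M2 also has all of its edges in M. -/
import Mathlib


open Finset
open scoped Classical

namespace Paper

variable {V : Type*}

/-- `t` is the vertex set of a triangle (cycle of length 3) of `G`. -/
def IsTriangle (G : SimpleGraph V) (t : Finset V) : Prop :=
  t.card = 3 ∧ ∀ x ∈ t, ∀ y ∈ t, x ≠ y → G.Adj x y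

/-- The (three) edges of a triangle with vertex set `t`. -/
def triEdges [DecidableEq V] (t : Finset V) : Finset (Sym2 V) :=
  t.sym2.filter (fun e => ¬ e.IsDiag)

/-- Some connected component of `G` is isomorphic to the complete graph `K₄`:
there are four pairwise distinct, pairwise adjacent vertices that have no
neighbours outside of these four vertices. -/
def HasK4Component (G : SimpleGraph V) : Prop :=
  ∃ a b c d : V, a ≠ b ∧ a ≠ c ∧ a ≠ d ∧ b ≠ c ∧ b ≠ d ∧ c ≠ d ∧
    G.Adj a b ∧ G.Adj a c ∧ G.Adj a d ∧ G.Adj b c ∧ G.Adj b d ∧ G.Adj c d ∧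
    ∀ x y : V, (x = a ∨ x = b ∨ x = c ∨ x = d) → G.Adj x y →
      (y = a ∨ y = b ∨ y = c ∨ y = d)

/-- The degree of the vertex `v` in the edge set `M`, i.e. the number of edges
of `M` incident to `v`. -/
noncomputable def degIn (M : Finset (Sym2 V)) (v : V) : ℕ :=
  (M.filter (fun e => v ∈ e)).card

/-- `M` is a 2-matching of `G`: a set of edges of `G` such that every vertex is
incident to at most two of its edges. -/
def Is2Matching (G : SimpleGraph V) (M : Finset (Sym2 V)) : Prop :=
  (∀ e ∈ M, e ∈ G.edgeSet) ∧ ∀ v : V, degIn M v ≤ 2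

/-- No triangle of `G` has all three of its edges in `M`. -/
def TriangleFree [DecidableEq V] (G : SimpleGraph V) (M : Finset (Sym2 V)) : Prop :=
  ∀ t : Finset V, IsTriangle G t → ¬ triEdges t ⊆ M

/-- The triangle `t` is unproblematic: some other triangle `t'` shares an edge
with `t` and `w(t) ≤ w(t')`. -/
def TriUnprob [DecidableEq V] (G : SimpleGraph V) (w : Sym2 V → ℝ) (t : Finset V) : Prop :=
  ∃ t' : Finset V, IsTriangle G t' ∧ t' ≠ t ∧ (triEdges t ∩ triEdges t').Nonempty ∧
    ∑ e ∈ triEdges t, w e ≤ ∑ e ∈ triEdges t', w e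

/-- The triangle `t` is problematic. -/
def ProblemTri [DecidableEq V] (G : SimpleGraph V) (w : Sym2 V → ℝ) (t : Finset V) : Prop :=
  IsTriangle G t ∧ ¬ TriUnprob G w t

/-- Let `G` be subcubic with nonnegative edge weights `w`, let
`t = (a,b,c)` and `t' = (a,b,d)` (with `d ∉ {a,b,c}`) be triangles of `G`
sharing the edge `(a,b)` and satisfying `w(t) ≤ w(t')`, and let `M` be a
2-matching of `G` containing all three edges of `t`. Then there is a
2-matching `M₂` of `G` with `w(M₂) ≥ w(M)` that does not contain all three
edges of `t`, and every triangle of `G` all of whose edges lie in `M₂` also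
has all of its edges in `M`. -/
lemma degIn_eq [DecidableEq V] (M : Finset (Sym2 V)) (v : V) :
    degIn M v = (M.filter (fun e => v ∈ e)).card := by
  unfold degIn
  rw [Finset.filter_congr_decidable]

lemma triEdges_pair [DecidableEq V] {x y z : V} (hxy : x ≠ y) (hxz : x ≠ z) (hyz : y ≠ z) :
    triEdges ({x, y, z} : Finset V) = {s(x,y), s(x,z), s(y,z)} := by
  ext e
  induction e using Sym2.ind with
  | _ u v =>
    simp only [triEdges, Finset.mem_filter, Finset.mk_mem_sym2_iff, Finset.mem_insert,
      Finset.mem_singleton, Sym2.eq_iff, Sym2.isDiag_iff_proj_eq]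
    constructor
    · rintro ⟨⟨hu, hv⟩, huv⟩
      rcases hu with rfl|rfl|rfl <;> rcases hv with rfl|rfl|rfl <;> tauto
    · rintro ((⟨rfl,rfl⟩|⟨rfl,rfl⟩)|(⟨rfl,rfl⟩|⟨rfl,rfl⟩)|(⟨rfl,rfl⟩|⟨rfl,rfl⟩)) <;> tauto

lemma tri_distinct [DecidableEq V] {x y z : V} (h : ({x,y,z} : Finset V).card = 3) :
    x ≠ y ∧ x ≠ z ∧ y ≠ z := by
  refine ⟨?_, ?_, ?_⟩ <;> rintro rfl
  · have hsub : ({x,x,z} : Finset V) ⊆ {x, z} := by intro u hu; simp at hu ⊢; tauto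
    have h1 := Finset.card_le_card hsub
    have h2 : ({x,z} : Finset V).card ≤ 2 := (Finset.card_insert_le x {z}).trans (by simp)
    omega
  · have hsub : ({x,y,x} : Finset V) ⊆ {x, y} := by intro u hu; simp at hu ⊢; tauto
    have h1 := Finset.card_le_card hsub
    have h2 : ({x,y} : Finset V).card ≤ 2 := (Finset.card_insert_le x {y}).trans (by simp)
    omega
  · have hsub : ({x,y,y} : Finset V) ⊆ {x, y} := by intro u hu; simp at hu ⊢; tauto
    have h1 := Finset.card_le_card hsub
    have h2 : ({x,y} : Finset V).card ≤ 2 := (Finset.card_insert_le x {y}).trans (by simp)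
    omega

lemma sum_triEdges [DecidableEq V] {x y z : V} (hxy : x ≠ y) (hxz : x ≠ z) (hyz : y ≠ z)
    (w : Sym2 V → ℝ) :
    ∑ e ∈ triEdges ({x, y, z} : Finset V), w e = w s(x,y) + w s(x,z) + w s(y,z) := by
  rw [triEdges_pair hxy hxz hyz]
  rw [Finset.sum_insert (by simp [Sym2.eq_iff]; tauto),
      Finset.sum_insert (by simp [Sym2.eq_iff]; tauto), Finset.sum_singleton]
  ring

lemma swap_lemma [Fintype V] [DecidableEq V]
    (G : SimpleGraph V) [DecidableRel G.Adj]
    (hsub : ∀ v : V, G.degree v ≤ 3)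
    (w : Sym2 V → ℝ)
    (a b c d : V)
    (ht : IsTriangle G {a, b, c})
    (had : G.Adj a d) (hbd : G.Adj b d)
    (hda : d ≠ a) (hdb : d ≠ b) (hdc : d ≠ c)
    (hwac : w s(a,c) ≤ w s(a,d))
    (M : Finset (Sym2 V)) (hM : Is2Matching G M)
    (htM : triEdges {a, b, c} ⊆ M) :
    ∃ M₂ : Finset (Sym2 V), Is2Matching G M₂ ∧
      ∑ e ∈ M, w e ≤ ∑ e ∈ M₂, w e ∧
      ¬ triEdges {a, b, c} ⊆ M₂ ∧
      ∀ t : Finset V, IsTriangle G t → triEdges t ⊆ M₂ → triEdges t ⊆ M := by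
  obtain ⟨hab, hac, hbc⟩ := tri_distinct ht.1
  have hTE := triEdges_pair hab hac hbc
  have habM : s(a,b) ∈ M := htM (by rw [hTE]; simp)
  have hacM : s(a,c) ∈ M := htM (by rw [hTE]; simp)
  have hbcM : s(b,c) ∈ M := htM (by rw [hTE]; simp)
  have hdeg : ∀ v : V, (M.filter (fun e => v ∈ e)).card ≤ 2 := by
    intro v
    have := hM.2 v
    rwa [degIn_eq] at this
  -- three distinct edges at a vertex contradict the 2-matching property
  have key : ∀ (v : V) (e₁ e₂ e₃ : Sym2 V), e₁ ≠ e₂ → e₁ ≠ e₃ → e₂ ≠ e₃ →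
      v ∈ e₁ → v ∈ e₂ → v ∈ e₃ → e₁ ∈ M → e₂ ∈ M → ¬ e₃ ∈ M := by
    intro v e₁ e₂ e₃ h12 h13 h23 hv1 hv2 hv3 h1 h2 h3
    have hsub3 : ({e₁, e₂, e₃} : Finset (Sym2 V)) ⊆ M.filter (fun e => v ∈ e) := by
      intro e he
      simp only [Finset.mem_insert, Finset.mem_singleton] at he
      rcases he with rfl|rfl|rfl <;> simp [Finset.mem_filter, *]
    have hcard : ({e₁, e₂, e₃} : Finset (Sym2 V)).card = 3 := by
      rw [Finset.card_insert_of_notMem (by simp [h12, h13]),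
          Finset.card_insert_of_notMem (by simp [h23]), Finset.card_singleton]
    have h1 := Finset.card_le_card hsub3
    have h2 := hdeg v
    omega
  have hadM : s(a,d) ∉ M := by
    refine key a s(a,b) s(a,c) s(a,d) ?_ ?_ ?_ (by simp) (by simp) (by simp) habM hacM
    all_goals simp [Sym2.eq_iff]; tauto
  have hbdM : s(b,d) ∉ M := by
    refine key b s(a,b) s(b,c) s(b,d) ?_ ?_ ?_ (by simp) (by simp) (by simp) habM hbcM
    all_goals simp [Sym2.eq_iff]; tauto
  have hcdM : s(c,d) ∉ M := by
    refine key c s(a,c) s(b,c) s(c,d) ?_ ?_ ?_ (by simp) (by simp) (by simp) hacM hbcM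
    all_goals simp [Sym2.eq_iff]; tauto
  -- d is incident to at most one edge of M
  have h5 : a ∈ G.neighborFinset d := by simp [SimpleGraph.mem_neighborFinset, had.symm]
  have h6 : b ∈ (G.neighborFinset d).erase a := by
    simp only [Finset.mem_erase, SimpleGraph.mem_neighborFinset]
    exact ⟨fun h => hab h.symm, hbd.symm⟩
  have hdegd : (M.filter (fun e => d ∈ e)).card ≤ 1 := by
    have hmap : M.filter (fun e => d ∈ e) ⊆
        (((G.neighborFinset d).erase a).erase b).image (fun y => s(d, y)) := by
      intro e he
      simp only [Finset.mem_filter] at he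
      obtain ⟨heM, hde⟩ := he
      have heE := hM.1 e heM
      have hsp := Sym2.other_spec hde
      set y := Sym2.Mem.other hde with hy
      have hadj : G.Adj d y := by rw [← hsp] at heE; exact heE
      have hya : y ≠ a := by
        rintro rfl
        rw [← hsp, Sym2.eq_swap] at heM
        exact hadM heM
      have hyb : y ≠ b := by
        rintro rfl
        rw [← hsp, Sym2.eq_swap] at heM
        exact hbdM heM
      simp only [Finset.mem_image]
      refine ⟨y, ?_, hsp⟩
      simp only [Finset.mem_erase, SimpleGraph.mem_neighborFinset]
      exact ⟨hyb, hya, hadj⟩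
    have h1 := Finset.card_le_card hmap
    have h2 := Finset.card_image_le (f := fun y => s(d, y))
      (s := ((G.neighborFinset d).erase a).erase b)
    have h3 := Finset.card_erase_of_mem h6
    have h3' := Finset.card_erase_of_mem h5
    have h4 : (G.neighborFinset d).card ≤ 3 := by
      rw [SimpleGraph.card_neighborFinset_eq_degree]; exact hsub d
    have h7 : 1 ≤ (G.neighborFinset d).card := Finset.card_pos.mpr ⟨a, h5⟩
    have h8 : 1 ≤ ((G.neighborFinset d).erase a).card := Finset.card_pos.mpr ⟨b, h6⟩
    omega
  -- neighbors of a are among {b, c, d}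
  have hnbra : ∀ z : V, G.Adj a z → z = b ∨ z = c ∨ z = d := by
    intro z hz
    by_contra hzz
    push_neg at hzz
    obtain ⟨hzb, hzc, hzd⟩ := hzz
    have hsub4 : ({b, c, d, z} : Finset V) ⊆ G.neighborFinset a := by
      intro x hx
      simp only [Finset.mem_insert, Finset.mem_singleton] at hx
      simp only [SimpleGraph.mem_neighborFinset]
      rcases hx with rfl|rfl|rfl|rfl
      · exact ht.2 a (by simp) x (by simp) hab
      · exact ht.2 a (by simp) x (by simp) hac
      · exact had
      · exact hz
    have hc4 : ({b, c, d, z} : Finset V).card = 4 := by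
      rw [Finset.card_insert_of_notMem (by simp [hbc]; exact ⟨Ne.symm hdb, Ne.symm hzb⟩),
          Finset.card_insert_of_notMem (by simp; exact ⟨Ne.symm hdc, Ne.symm hzc⟩),
          Finset.card_insert_of_notMem (by simp; exact fun h => hzd h.symm),
          Finset.card_singleton]
    have hle := Finset.card_le_card hsub4
    have h4 : (G.neighborFinset a).card ≤ 3 := by
      rw [SimpleGraph.card_neighborFinset_eq_degree]; exact hsub a
    omega
  have hacad : s(a,c) ≠ s(a,d) := by simp [Sym2.eq_iff]; tauto
  -- the swapped 2-matching
  refine ⟨insert s(a,d) (M.erase s(a,c)), ⟨?_, ?_⟩, ?_, ?_, ?_⟩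
  · -- edges of G
    intro e he
    rcases Finset.mem_insert.mp he with rfl | he
    · exact had
    · exact hM.1 e (Finset.mem_of_mem_erase he)
  · -- degree condition
    intro v
    rw [degIn_eq]
    have hsplit : (insert s(a,d) (M.erase s(a,c))).filter (fun e => v ∈ e) ⊆
        insert s(a,d) ((M.filter (fun e => v ∈ e)).erase s(a,c)) := by
      intro e he
      simp only [Finset.mem_filter, Finset.mem_insert, Finset.mem_erase] at he ⊢
      tauto
    have hle := Finset.card_le_card hsplit
    by_cases hvad : v ∈ s(a,d)
    · rcases Sym2.mem_iff.mp hvad with hva | hvd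
      · -- v = a
        have hmem : s(a,c) ∈ M.filter (fun e => v ∈ e) := by
          simp only [Finset.mem_filter, Sym2.mem_iff]
          exact ⟨hacM, Or.inl hva⟩
        have he1 := Finset.card_erase_of_mem hmem
        have he2 := hdeg v
        have := Finset.card_insert_le s(a,d) ((M.filter (fun e => v ∈ e)).erase s(a,c))
        omega
      · -- v = d
        have hsub2 : (M.filter (fun e => v ∈ e)).erase s(a,c) ⊆ M.filter (fun e => d ∈ e) := by
          intro e he
          have h1 := Finset.mem_of_mem_erase he
          simp only [Finset.mem_filter] at h1 ⊢
          exact ⟨h1.1, hvd ▸ h1.2⟩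
        have := (Finset.card_le_card hsub2).trans hdegd
        have := Finset.card_insert_le s(a,d) ((M.filter (fun e => v ∈ e)).erase s(a,c))
        omega
    · -- v not in the new edge
      have hsub2 : (insert s(a,d) (M.erase s(a,c))).filter (fun e => v ∈ e) ⊆
          M.filter (fun e => v ∈ e) := by
        intro e he
        simp only [Finset.mem_filter, Finset.mem_insert, Finset.mem_erase] at he ⊢
        rcases he with ⟨rfl | ⟨_, heM⟩, hv⟩
        · exact absurd hv hvad
        · exact ⟨heM, hv⟩
      exact (Finset.card_le_card hsub2).trans (hdeg v)
  · -- weight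
    have hnotin : s(a,d) ∉ M.erase s(a,c) := fun h => hadM (Finset.mem_of_mem_erase h)
    rw [Finset.sum_insert hnotin, Finset.sum_erase_eq_sub hacM]
    linarith
  · -- t not contained
    rw [hTE]
    intro hcon
    have : s(a,c) ∈ insert s(a,d) (M.erase s(a,c)) := hcon (by simp)
    rcases Finset.mem_insert.mp this with h | h
    · exact hacad h
    · exact (Finset.notMem_erase _ _) h
  · -- no new triangles
    intro u hu hsubu
    intro e he
    have heM2 := hsubu he
    rcases Finset.mem_insert.mp heM2 with rfl | heM
    · -- e = s(a,d): derive a contradiction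
      exfalso
      have hau : a ∈ u ∧ d ∈ u := by
        have := (Finset.mem_filter.mp he).1
        exact Finset.mk_mem_sym2_iff.mp this
      obtain ⟨hauu, hduu⟩ := hau
      have hADsub : ({a, d} : Finset V) ⊆ u := by
        intro x hx; simp at hx; rcases hx with rfl|rfl <;> assumption
      have hcard2 : ({a, d} : Finset V).card = 2 := by
        rw [Finset.card_insert_of_notMem (by simp; exact fun h => hda h.symm),
            Finset.card_singleton]
      have hex : ∃ z ∈ u, z ∉ ({a, d} : Finset V) := by
        by_contra hcon
        push_neg at hcon
        have hsubad : u ⊆ ({a, d} : Finset V) := hcon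
        have := Finset.card_le_card hsubad
        have := hu.1
        omega
      obtain ⟨z, hzu, hznot⟩ := hex
      simp only [Finset.mem_insert, Finset.mem_singleton, not_or] at hznot
      obtain ⟨hza, hzd⟩ := hznot
      have hzadj : G.Adj a z := hu.2 a hauu z hzu (fun h => hza h.symm)
      have hzdE : s(d, z) ∈ triEdges u := by
        simp only [triEdges, Finset.mem_filter, Finset.mk_mem_sym2_iff,
          Sym2.isDiag_iff_proj_eq]
        exact ⟨⟨hduu, hzu⟩, fun h => hzd h.symm⟩
      have hzdM2 := hsubu hzdE
      rcases hnbra z hzadj with rfl | rfl | rfl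
      · -- z = b : s(d,b) would be in M
        rcases Finset.mem_insert.mp hzdM2 with h | h
        · rw [Sym2.eq_iff] at h; tauto
        · have h2 := Finset.mem_of_mem_erase h
          rw [Sym2.eq_swap] at h2
          exact hbdM h2
      · -- z = c
        rcases Finset.mem_insert.mp hzdM2 with h | h
        · rw [Sym2.eq_iff] at h; tauto
        · have h2 := Finset.mem_of_mem_erase h
          rw [Sym2.eq_swap] at h2
          exact hcdM h2
      · exact hzd rfl
    · exact Finset.mem_of_mem_erase heM

theorem remove_unproblematic_triangle {V : Type*} [Fintype V] [DecidableEq V]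
    (G : SimpleGraph V) [DecidableRel G.Adj]
    (hsub : ∀ v : V, G.degree v ≤ 3)
    (w : Sym2 V → ℝ) (hw : ∀ e, 0 ≤ w e)
    (a b c d : V)
    (ht : IsTriangle G {a, b, c}) (ht' : IsTriangle G {a, b, d})
    (hd : d ≠ a ∧ d ≠ b ∧ d ≠ c)
    (hwt : ∑ e ∈ triEdges {a, b, c}, w e ≤ ∑ e ∈ triEdges {a, b, d}, w e)
    (M : Finset (Sym2 V)) (hM : Is2Matching G M)
    (htM : triEdges {a, b, c} ⊆ M) :
    ∃ M₂ : Finset (Sym2 V), Is2Matching G M₂ ∧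
      ∑ e ∈ M, w e ≤ ∑ e ∈ M₂, w e ∧
      ¬ triEdges {a, b, c} ⊆ M₂ ∧
      ∀ t : Finset V, IsTriangle G t → triEdges t ⊆ M₂ → triEdges t ⊆ M := by
  obtain ⟨hda, hdb, hdc⟩ := hd
  obtain ⟨hab, hac, hbc⟩ := tri_distinct ht.1
  have had : G.Adj a d := ht'.2 a (by simp) d (by simp) (fun h => hda h.symm)
  have hbd : G.Adj b d := ht'.2 b (by simp) d (by simp) (fun h => hdb h.symm)
  rw [sum_triEdges hab hac hbc w, sum_triEdges hab (fun h => hda h.symm) (fun h => hdb h.symm) w]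
    at hwt
  by_cases hcase : w s(a,c) ≤ w s(a,d)
  · exact swap_lemma G hsub w a b c d ht had hbd hda hdb hdc hcase M hM htM
  · have hbcd : w s(b,c) ≤ w s(b,d) := by linarith
    have hset : ({b, a, c} : Finset V) = {a, b, c} := Finset.insert_comm b a {c}
    have ht2 : IsTriangle G {b, a, c} := by rw [hset]; exact ht
    have := swap_lemma G hsub w b a c d ht2 hbd had hdb hda hdc hbcd M hM (by rw [hset]; exact htM)
    rw [hset] at this
    exact this


end Paper
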